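/- Suppose α = α(n) with α = 1/β_n (its maximal value) and β_n → ∞. Then for each x ≥ 0, lim_{n→∞} β_n · Φ_{n,2}(x) = 2x, where Φ_{n,2}(x) = (1 + 3φ + 3φ² − 3xψ − 6xφψ + 3x²ψ² + 3xβ_n + 3αxβ_n²)/(3(ψ + β_n)²). -/

import Mathlib

open Filter

/-- Limit of the scaled second central moment with `α = 1/β_n`:
`β_n · Φ_{n,2}(x) → 2x`. -/
theorem stmt_6 (φ ψ : ℝ) (hφ : 0 ≤ φ) (hψ : 0 ≤ ψ)
    (β : ℕ → ℝ) (hβ1 : ∀ n, 1 ≤ β n) (hβmono : StrictMono β)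
    (hβ : Tendsto β atTop atTop) (x : ℝ) (hx : 0 ≤ x) :
    Tendsto (fun n => β n *
        ((1 + 3 * φ + 3 * φ ^ 2 - 3 * x * ψ - 6 * x * φ * ψ + 3 * x ^ 2 * ψ ^ 2
            + 3 * x * β n + 3 * (1 / β n) * x * (β n) ^ 2) / (3 * (ψ + β n) ^ 2)))
      atTop (nhds (2 * x)) := by
  set C : ℝ := 1 + 3 * φ + 3 * φ ^ 2 - 3 * x * ψ - 6 * x * φ * ψ + 3 * x ^ 2 * ψ ^ 2 with hC
  have hf : Tendsto (fun t : ℝ => t *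
      ((C + 3 * x * t + 3 * (1 / t) * x * t ^ 2) / (3 * (ψ + t) ^ 2)))
      atTop (nhds (2 * x)) := by
    have h1 : Tendsto (fun t : ℝ => C / t + 6 * x) atTop (nhds (C * 0 + 6 * x)) := by
      refine Tendsto.add ?_ tendsto_const_nhds
      exact (tendsto_inv_atTop_zero.const_mul C).congr (fun t => (div_eq_mul_inv C t).symm)
    have h2 : Tendsto (fun t : ℝ => 3 * (ψ / t + 1) ^ 2) atTop
        (nhds (3 * (ψ * 0 + 1) ^ 2)) := by
      refine Tendsto.const_mul 3 (Tendsto.pow ?_ 2)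
      refine Tendsto.add ?_ tendsto_const_nhds
      exact (tendsto_inv_atTop_zero.const_mul ψ).congr (fun t => (div_eq_mul_inv ψ t).symm)
    have h3 : Tendsto (fun t : ℝ => (C / t + 6 * x) / (3 * (ψ / t + 1) ^ 2)) atTop
        (nhds ((C * 0 + 6 * x) / (3 * (ψ * 0 + 1) ^ 2))) := h1.div h2 (by norm_num)
    have h4 : (C * 0 + 6 * x) / (3 * (ψ * 0 + 1) ^ 2) = 2 * x := by ring
    rw [h4] at h3
    refine h3.congr' ?_
    filter_upwards [eventually_ge_atTop (1 : ℝ)] with t ht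
    have ht0 : t ≠ 0 := by linarith
    have hψt : ψ + t ≠ 0 := by positivity
    field_simp
    ring
  have key : Tendsto (fun n => (fun t : ℝ => t *
      ((C + 3 * x * t + 3 * (1 / t) * x * t ^ 2) / (3 * (ψ + t) ^ 2))) (β n))
      atTop (nhds (2 * x)) := hf.comp hβ
  exact key
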